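/- Let Φ = {φ^1,…,φ^{d+1}} ⊂ ℝ^d with ‖φ^j‖₂ = 1 and ⟨φ^i, φ^j⟩ = −1/d for i ≠ j. Then with a = 1/(8d), the closed Euclidean unit ball B₂ is contained in ∪_{j=1}^{d+1} B°₂(a φ^j): more precisely, for every x with 1/2 ≤ ‖x‖₂ ≤ 1 there exists k such that ‖x − a φ^k‖₂² ≤ 1 − 1/(64 d²). -/

import Mathlib

open RealInnerProductSpace

theorem stmt8 (d : ℕ) (hd : 1 ≤ d) (φ : Fin (d + 1) → EuclideanSpace ℝ (Fin d))
    (hnorm : ∀ j, ‖φ j‖ = 1)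
    (hinner : ∀ i j, i ≠ j → ⟪φ i, φ j⟫ = -1 / d)
    (a : ℝ) (ha : a = 1 / (8 * d)) :
    (∀ x : EuclideanSpace ℝ (Fin d), 1 / 2 ≤ ‖x‖ → ‖x‖ ≤ 1 →
      ∃ k, ‖x - a • φ k‖ ^ 2 ≤ 1 - 1 / (64 * (d : ℝ) ^ 2)) ∧
    Metric.closedBall (0 : EuclideanSpace ℝ (Fin d)) 1 ⊆
      ⋃ j, Metric.ball (a • φ j) 1 := by
  have hD : (1:ℝ) ≤ (d:ℝ) := by exact_mod_cast hd
  have hD0 : (0:ℝ) < (d:ℝ) := by linarith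
  -- inner products
  have hgram : ∀ i j : Fin (d+1), ⟪φ i, φ j⟫ = if i = j then 1 else -1/(d:ℝ) := by
    intro i j
    by_cases h : i = j
    · subst h
      rw [if_pos rfl, real_inner_self_eq_norm_sq, hnorm i]
      norm_num
    · rw [if_neg h]
      exact hinner i j h
  -- row sums are zero
  have hrow : ∀ i : Fin (d+1), ∑ j, ⟪φ i, φ j⟫ = 0 := by
    intro i
    have : ∑ j, ⟪φ i, φ j⟫ = ∑ j : Fin (d+1), ((-1/(d:ℝ)) + if i = j then 1 + 1/(d:ℝ) else 0) := by
      refine Finset.sum_congr rfl fun j _ => ?_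
      rw [hgram]
      by_cases h : i = j <;> simp [h] <;> field_simp <;> ring
    rw [this, Finset.sum_add_distrib, Finset.sum_ite_eq, Finset.sum_const]
    simp
    field_simp
    ring
  -- the vectors sum to zero
  have hS : (∑ j, φ j) = (0 : EuclideanSpace ℝ (Fin d)) := by
    rw [← inner_self_eq_zero (𝕜 := ℝ)]
    rw [sum_inner]
    refine Finset.sum_eq_zero fun i _ => ?_
    rw [inner_sum]
    exact hrow i
  -- linear independence of d of them
  have hli : LinearIndependent ℝ (fun i : Fin d => φ i.succ) := by
    rw [Fintype.linearIndependent_iff]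
    intro g hg
    have key : ∀ i : Fin d, g i * (1 + 1/(d:ℝ)) = (1/(d:ℝ)) * ∑ j, g j := by
      intro i
      have h0 : ⟪φ i.succ, ∑ j : Fin d, g j • φ j.succ⟫ = 0 := by rw [hg]; simp
      rw [inner_sum] at h0
      simp_rw [real_inner_smul_right, hgram] at h0
      have : ∑ j : Fin d, g j * (if i.succ = j.succ then 1 else -1/(d:ℝ))
          = ∑ j : Fin d, ((-1/(d:ℝ)) * g j + if i = j then g j * (1 + 1/(d:ℝ)) else 0) := by
        refine Finset.sum_congr rfl fun j _ => ?_
        by_cases h : i = j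
        · subst h
          rw [if_pos rfl, if_pos rfl]
          ring
        · rw [if_neg (fun hc => h (Fin.succ_injective d hc)), if_neg h, add_zero]
          ring
      rw [this, Finset.sum_add_distrib, Finset.sum_ite_eq, ← Finset.mul_sum] at h0
      simp only [Finset.mem_univ, if_true] at h0
      linear_combination h0
    have hconst : ∀ i j : Fin d, g i = g j := by
      intro i j
      have h1 := key i
      have h2 := key j
      have h3 : g i * (1 + 1/(d:ℝ)) = g j * (1 + 1/(d:ℝ)) := by rw [h1, h2]
      have h4 : (0:ℝ) < 1 + 1/(d:ℝ)  := by positivity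
      exact mul_right_cancel₀ (ne_of_gt h4) h3
    intro i
    have hsum : ∑ j, g j = (d:ℝ) * g i := by
      rw [Finset.sum_congr rfl fun j _ => hconst j i]
      simp [mul_comm]
    have hkey := key i
    have hdne : (d:ℝ) ≠ 0 := ne_of_gt hD0
    have h5 : (1/(d:ℝ)) * ((d:ℝ) * g i) = g i := by field_simp
    rw [hsum, h5] at hkey
    have h6 : g i * ((d:ℝ))⁻¹ = 0 := by linear_combination hkey
    field_simp at h6
    simpa using h6
  -- span is top
  have hspan : Submodule.span ℝ (Set.range φ) = ⊤ := by
    have hcard : Fintype.card (Fin d) = Module.finrank ℝ (EuclideanSpace ℝ (Fin d)) := by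
      simp [finrank_euclideanSpace_fin]
    haveI : Nonempty (Fin d) := ⟨⟨0, hd⟩⟩
    have h1 : Submodule.span ℝ (Set.range (fun i : Fin d => φ i.succ)) = ⊤ :=
      LinearIndependent.span_eq_top_of_card_eq_finrank hli hcard
    refine top_le_iff.mp ?_
    rw [← h1]
    refine Submodule.span_mono ?_
    rintro _ ⟨i, rfl⟩
    exact ⟨i.succ, rfl⟩
  -- frame identity
  have hframe : ∀ x : EuclideanSpace ℝ (Fin d),
      ∑ j, ⟪x, φ j⟫ • φ j = (((d:ℝ)+1)/(d:ℝ)) • x := by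
    intro x
    have hx : x ∈ Submodule.span ℝ (Set.range φ) := by rw [hspan]; trivial
    induction hx using Submodule.span_induction with
    | mem y hy =>
      obtain ⟨i, rfl⟩ := hy
      have : ∑ j, ⟪φ i, φ j⟫ • φ j
          = ∑ j : Fin (d+1), ((-1/(d:ℝ)) • φ j + if i = j then ((1:ℝ) + 1/(d:ℝ)) • φ i else 0) := by
        refine Finset.sum_congr rfl fun j _ => ?_
        rw [hgram]
        by_cases h : i = j
        · subst h
          rw [if_pos rfl, if_pos rfl, ← add_smul]
          congr 1
          field_simp
          ring
        · rw [if_neg h, if_neg h, add_zero]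
      rw [this, Finset.sum_add_distrib, Finset.sum_ite_eq, ← Finset.smul_sum, hS]
      simp only [Finset.mem_univ, if_true, smul_zero, zero_add]
      congr 1
      field_simp
    | zero => simp
    | add y z hy hz ihy ihz =>
      simp_rw [inner_add_left, add_smul, Finset.sum_add_distrib, ihy, ihz, smul_add]
    | smul r y hy ih =>
      simp_rw [real_inner_smul_left, mul_smul, ← Finset.smul_sum, ih, smul_comm r]
  -- Parseval-type identity
  have hpars : ∀ x : EuclideanSpace ℝ (Fin d),
      ∑ j, ⟪x, φ j⟫ ^ 2 = (((d:ℝ)+1)/(d:ℝ)) * ‖x‖^2 := by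
    intro x
    have h1 : ⟪x, ∑ j, ⟪x, φ j⟫ • φ j⟫ = ⟪x, (((d:ℝ)+1)/(d:ℝ)) • x⟫ := by rw [hframe x]
    rw [inner_sum] at h1
    simp_rw [real_inner_smul_right] at h1
    rw [real_inner_self_eq_norm_sq] at h1
    rw [← h1]
    refine Finset.sum_congr rfl fun j _ => ?_
    ring
  -- sum of coefficients is zero
  have hczero : ∀ x : EuclideanSpace ℝ (Fin d), ∑ j, ⟪x, φ j⟫ = 0 := by
    intro x
    rw [← inner_sum, hS, inner_zero_right]
  -- max inner product bound
  have hmax : ∀ x : EuclideanSpace ℝ (Fin d), 0 < ‖x‖ → ∃ k, ‖x‖/(d:ℝ) ≤ ⟪x, φ k⟫ := by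
    intro x hx
    obtain ⟨k, hk⟩ := Finite.exists_max (fun j : Fin (d+1) => ⟪x, φ j⟫)
    refine ⟨k, ?_⟩
    have hbd : ∀ j, ⟪x, φ j⟫ * (⟪x, φ j⟫ + ‖x‖) ≤ ⟪x, φ k⟫ * (⟪x, φ j⟫ + ‖x‖) := by
      intro j
      have h1 : |⟪x, φ j⟫| ≤ ‖x‖ := by
        calc |⟪x, φ j⟫| ≤ ‖x‖ * ‖φ j‖ := abs_real_inner_le_norm x (φ j)
        _ = ‖x‖ := by rw [hnorm j, mul_one]
      have h2 : 0 ≤ ⟪x, φ j⟫ + ‖x‖ := by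
        have := neg_abs_le ⟪x, φ j⟫
        linarith
      exact mul_le_mul_of_nonneg_right (hk j) h2
    have hsum : ∑ j, ⟪x, φ j⟫ * (⟪x, φ j⟫ + ‖x‖) = (((d:ℝ)+1)/(d:ℝ)) * ‖x‖^2 := by
      have : ∑ j, ⟪x, φ j⟫ * (⟪x, φ j⟫ + ‖x‖)
          = ∑ j, (⟪x, φ j⟫^2 + ⟪x, φ j⟫ * ‖x‖) := by
        refine Finset.sum_congr rfl fun j _ => ?_; ring
      rw [this, Finset.sum_add_distrib, hpars x, ← Finset.sum_mul, hczero x, zero_mul, add_zero]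
    have hsum2 : ∑ j, ⟪x, φ k⟫ * (⟪x, φ j⟫ + ‖x‖) = ⟪x, φ k⟫ * (((d:ℝ)+1) * ‖x‖) := by
      rw [← Finset.mul_sum]
      congr 1
      rw [Finset.sum_add_distrib, hczero x, Finset.sum_const]
      simp
    have hle : (((d:ℝ)+1)/(d:ℝ)) * ‖x‖^2 ≤ ⟪x, φ k⟫ * (((d:ℝ)+1) * ‖x‖) := by
      rw [← hsum, ← hsum2]
      exact Finset.sum_le_sum fun j _ => hbd j
    have hle2 : ((d:ℝ)+1) * ‖x‖^2 ≤ ⟪x, φ k⟫ * (((d:ℝ)+1) * ‖x‖) * (d:ℝ) := by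
      have h7 := mul_le_mul_of_nonneg_right hle (le_of_lt hD0)
      calc ((d:ℝ)+1) * ‖x‖^2 = (((d:ℝ)+1)/(d:ℝ) * ‖x‖^2) * (d:ℝ) := by field_simp
      _ ≤ _ := h7
    rw [div_le_iff₀ hD0]
    nlinarith [hle2, mul_pos (show (0:ℝ) < (d:ℝ)+1 by linarith) hx]
  -- main covering estimate
  have hmain : ∀ x : EuclideanSpace ℝ (Fin d), 1 / 2 ≤ ‖x‖ → ‖x‖ ≤ 1 →
      ∃ k, ‖x - a • φ k‖ ^ 2 ≤ 1 - 1 / (64 * (d : ℝ) ^ 2) := by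
    intro x hx1 hx2
    obtain ⟨k, hk⟩ := hmax x (by linarith)
    refine ⟨k, ?_⟩
    have hexp : ‖x - a • φ k‖ ^ 2 = ‖x‖^2 - 2 * (a * ⟪x, φ k⟫) + a^2 := by
      rw [norm_sub_sq_real, real_inner_smul_right, norm_smul, hnorm k]
      rw [ha]
      have hn : ‖(1:ℝ) / (8 * (d:ℝ))‖ = 1 / (8 * (d:ℝ)) := Real.norm_of_nonneg (by positivity)
      rw [hn]
      ring
    rw [hexp, ha]
    have hck : 1/(2*(d:ℝ)) ≤ ⟪x, φ k⟫ := by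
      refine le_trans ?_ hk
      rw [div_le_div_iff₀ (by positivity) hD0]
      nlinarith [mul_le_mul_of_nonneg_right hx1 (show (0:ℝ) ≤ 2*(d:ℝ) by positivity)]
    have h1 : ‖x‖^2 ≤ 1 := by nlinarith [norm_nonneg x]
    have h2 : (0:ℝ) < (d:ℝ)^2 := by positivity
    have h3 : 1/(16*(d:ℝ)^2) ≤ (1 / (8 * (d:ℝ))) * ⟪x, φ k⟫ := by
      calc 1/(16*(d:ℝ)^2) = (1 / (8 * (d:ℝ))) * (1/(2*(d:ℝ))) := by field_simp; ring
      _ ≤ (1 / (8 * (d:ℝ))) * ⟪x, φ k⟫ := by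
          exact mul_le_mul_of_nonneg_left hck (by positivity)
    have h4 : (1 / (8 * (d:ℝ)))^2 = 1/(64*(d:ℝ)^2) := by field_simp; ring
    rw [h4]
    have h6 : 1/(16*(d:ℝ)^2) = 4 * (1/(64*(d:ℝ)^2)) := by field_simp; ring
    have h7 : (0:ℝ) ≤ 1/(64*(d:ℝ)^2) := by positivity
    linarith
  refine ⟨hmain, ?_⟩
  intro x hx
  rw [Metric.mem_closedBall, dist_zero_right] at hx
  rw [Set.mem_iUnion]
  by_cases h : 1/2 ≤ ‖x‖
  · obtain ⟨k, hk⟩ := hmain x h hx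
    refine ⟨k, ?_⟩
    rw [Metric.mem_ball, dist_eq_norm]
    have h2 : (0:ℝ) < 1 / (64 * (d:ℝ)^2) := by positivity
    nlinarith [norm_nonneg (x - a • φ k), hk]
  · refine ⟨0, ?_⟩
    rw [Metric.mem_ball, dist_eq_norm]
    calc ‖x - a • φ 0‖ ≤ ‖x‖ + ‖a • φ 0‖ := norm_sub_le _ _
    _ = ‖x‖ + a := by
        rw [norm_smul, hnorm 0, mul_one, ha, Real.norm_of_nonneg (by positivity), ← ha]
    _ < 1 := by
        have : a ≤ 1/8 := by
          rw [ha, div_le_div_iff₀ (by positivity) (by norm_num)]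
          linarith
        linarith [not_le.mp h]
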